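/- (Soundness of Bernstein sign pruning.) Let n ∈ ℕ, L : Fin n → ℕ, let a assign a real coefficient a_K to every multi-index K ≤ L, let p(x) = ∑_{K ≤ L} a_K · ∏_i (x i)^(K i), let d, d̄ : Fin n → ℝ satisfy d i < d̄ i for all i, and let b_K be the Bernstein coefficients of p over the box [d, d̄] given by b_K = ∑_{J ≤ K} (∏_i ((K i).choose (J i) : ℝ) / ((L i).choose (J i))) · (∏_i (d̄ i − d i)^(J i)) · ∑_{J ≤ I ≤ L} (∏_i ((I i).choose (J i) : ℝ)) · (∏_i (d i)^(I i − J i)) · a_I. If min_{K ≤ L} b_K > 0 then p(x) > 0 for every x in the box (in particular there is no x in the box with p(x) ≤ 0); and if max_{K ≤ L} b_K < 0 then p(x) < 0 for every x in the box. -/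

import Mathlib

/-- The finite set of multi-indices `K ≤ L`. -/
def multiIdx {n : ℕ} (L : Fin n → ℕ) : Finset (Fin n → ℕ) :=
  Fintype.piFinset fun i => Finset.range (L i + 1)

lemma multiIdx_nonempty {n : ℕ} (L : Fin n → ℕ) : (multiIdx L).Nonempty :=
  ⟨fun _ => 0, by simp [multiIdx, Fintype.mem_piFinset]⟩

/-- The Bernstein coefficients `b_K` of the polynomial with power-basis coefficients `a`
over the box `[d, d̄]`. -/
noncomputable def bernCoeff {n : ℕ} (L : Fin n → ℕ) (a : (Fin n → ℕ) → ℝ)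
    (d dbar : Fin n → ℝ) (K : Fin n → ℕ) : ℝ :=
  ∑ J ∈ multiIdx K,
    (∏ i, ((K i).choose (J i) : ℝ) / ((L i).choose (J i))) *
    (∏ i, (dbar i - d i) ^ (J i)) *
    ∑ I ∈ Fintype.piFinset (fun i => Finset.Icc (J i) (L i)),
      (∏ i, ((I i).choose (J i) : ℝ)) * (∏ i, (d i) ^ (I i - J i)) * a I

/-- The multivariate Bernstein basis polynomial. -/
noncomputable def ber {n : ℕ} (L : Fin n → ℕ) (t : Fin n → ℝ) (K : Fin n → ℕ) : ℝ :=
  ∏ i, ((L i).choose (K i) : ℝ) * t i ^ (K i) * (1 - t i) ^ (L i - K i)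

lemma ber_nonneg {n : ℕ} (L : Fin n → ℕ) (t : Fin n → ℝ) (ht : ∀ i, 0 ≤ t i ∧ t i ≤ 1)
    (K : Fin n → ℕ) : 0 ≤ ber L t K := by
  apply Finset.prod_nonneg
  intro i _
  have h1 := (ht i).1
  have h2 : (0:ℝ) ≤ 1 - t i := by linarith [(ht i).2]
  exact mul_nonneg (mul_nonneg (by positivity) (pow_nonneg h1 _)) (pow_nonneg h2 _)

lemma ber_sum_one {n : ℕ} (L : Fin n → ℕ) (t : Fin n → ℝ) :
    ∑ K ∈ multiIdx L, ber L t K = 1 := by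
  have h := Finset.prod_univ_sum (fun i => Finset.range (L i + 1))
    (fun i k => ((L i).choose k : ℝ) * t i ^ k * (1 - t i) ^ (L i - k))
  rw [multiIdx]
  unfold ber
  rw [← h]
  have : ∀ i : Fin n, ∑ k ∈ Finset.range (L i + 1),
      ((L i).choose k : ℝ) * t i ^ k * (1 - t i) ^ (L i - k) = 1 := by
    intro i
    calc ∑ k ∈ Finset.range (L i + 1),
          ((L i).choose k : ℝ) * t i ^ k * (1 - t i) ^ (L i - k)
        = ∑ k ∈ Finset.range (L i + 1),
          t i ^ k * (1 - t i) ^ (L i - k) * ((L i).choose k : ℝ) :=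
          Finset.sum_congr rfl (fun k _ => by ring)
      _ = (t i + (1 - t i)) ^ (L i) := (add_pow (t i) (1 - t i) (L i)).symm
      _ = 1 := by norm_num
  rw [Finset.prod_congr rfl (fun i _ => this i)]
  simp

/-- One-dimensional Bernstein expansion of the monomial `t^j`. -/
lemma oneDim (N j : ℕ) (hj : j ≤ N) (t : ℝ) :
    ∑ k ∈ Finset.range (N + 1),
      ((k.choose j : ℝ) / (N.choose j)) * ((N.choose k : ℝ) * t ^ k * (1 - t) ^ (N - k))
      = t ^ j := by
  have hc : ((N.choose j : ℝ)) ≠ 0 := by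
    exact_mod_cast (Nat.choose_pos hj).ne'
  have hsub : ∑ k ∈ Finset.Icc j N,
      ((k.choose j : ℝ) / (N.choose j)) * ((N.choose k : ℝ) * t ^ k * (1 - t) ^ (N - k))
      = ∑ k ∈ Finset.range (N + 1),
      ((k.choose j : ℝ) / (N.choose j)) * ((N.choose k : ℝ) * t ^ k * (1 - t) ^ (N - k)) := by
    apply Finset.sum_subset
    · intro k hk
      simp only [Finset.mem_Icc, Finset.mem_range] at *
      omega
    · intro k hk hk'
      simp only [Finset.mem_Icc, Finset.mem_range] at *
      have : k < j := by omega
      rw [Nat.choose_eq_zero_of_lt this]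
      simp
  rw [← hsub, ← Finset.Ico_add_one_right_eq_Icc, Finset.sum_Ico_eq_sum_range]
  have hterm : ∀ m ∈ Finset.range (N + 1 - j),
      (((j + m).choose j : ℝ) / (N.choose j)) * ((N.choose (j + m) : ℝ) * t ^ (j + m) * (1 - t) ^ (N - (j + m)))
      = t ^ j * (((N - j).choose m : ℝ) * t ^ m * (1 - t) ^ ((N - j) - m)) := by
    intro m hm
    simp only [Finset.mem_range] at hm
    have hjm : j + m ≤ N := by omega
    have hkey : (N.choose (j + m) : ℝ) * ((j + m).choose j : ℝ) = (N.choose j : ℝ) * ((N - j).choose m : ℝ) := by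
      have := Nat.choose_mul (n := N) (Nat.le_add_right j m)
      have h2 : j + m - j = m := by omega
      rw [h2] at this
      exact_mod_cast this
    have hpow : t ^ (j + m) = t ^ j * t ^ m := pow_add t j m
    have hsub2 : N - (j + m) = (N - j) - m := by omega
    rw [hpow, hsub2]
    rw [div_mul_eq_mul_div, div_eq_iff hc]
    linear_combination (t ^ j * t ^ m * (1 - t) ^ (N - j - m)) * hkey
  rw [Finset.sum_congr rfl hterm, ← Finset.mul_sum]
  have : ∑ m ∈ Finset.range (N + 1 - j), ((N - j).choose m : ℝ) * t ^ m * (1 - t) ^ ((N - j) - m) = 1 := by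
    have hrange : N + 1 - j = (N - j) + 1 := by omega
    rw [hrange]
    have := add_pow t (1 - t) (N - j)
    simp only [add_sub_cancel, one_pow] at this
    exact (Finset.sum_congr rfl (fun m _ => by ring)).trans this.symm
  rw [this, mul_one]

/-- Multivariate Bernstein expansion of a monomial in `t`. -/
lemma monomial_expand {n : ℕ} (L J : Fin n → ℕ) (hJ : J ∈ multiIdx L) (t : Fin n → ℝ) :
    ∏ i, t i ^ (J i) =
    ∑ K ∈ multiIdx L, (∏ i, ((K i).choose (J i) : ℝ) / ((L i).choose (J i))) * ber L t K := by
  rw [multiIdx]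
  have key : ∀ i : Fin n, t i ^ (J i) = ∑ k ∈ Finset.range (L i + 1),
      ((k.choose (J i) : ℝ) / ((L i).choose (J i))) *
        (((L i).choose k : ℝ) * t i ^ k * (1 - t i) ^ (L i - k)) := by
    intro i
    simp only [multiIdx, Fintype.mem_piFinset, Finset.mem_range] at hJ
    rw [oneDim (L i) (J i) (Nat.lt_succ_iff.mp (hJ i)) (t i)]
  rw [Finset.prod_congr rfl (fun i _ => key i)]
  rw [Finset.prod_univ_sum (fun i => Finset.range (L i + 1))
    (fun i k => ((k.choose (J i) : ℝ) / ((L i).choose (J i))) *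
      (((L i).choose k : ℝ) * t i ^ k * (1 - t i) ^ (L i - k)))]
  apply Finset.sum_congr rfl
  intro K _
  rw [ber, ← Finset.prod_mul_distrib]

/-- The Bernstein expansion of a polynomial over a box. -/
lemma expand {n : ℕ} (L : Fin n → ℕ) (a : (Fin n → ℕ) → ℝ) (d dbar : Fin n → ℝ)
    (x t : Fin n → ℝ) (hx : ∀ i, x i = (dbar i - d i) * t i + d i) :
    ∑ K ∈ multiIdx L, a K * ∏ i, x i ^ K i
      = ∑ K ∈ multiIdx L, bernCoeff L a d dbar K * ber L t K := by
  classical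
  have stepA : ∀ I : Fin n → ℕ, ∏ i, x i ^ I i =
      ∑ J ∈ multiIdx I, ∏ i,
        (((dbar i - d i) * t i) ^ (J i) * d i ^ (I i - J i) * ((I i).choose (J i) : ℝ)) := by
    intro I
    have hxi : ∀ i : Fin n, x i ^ I i = ∑ j ∈ Finset.range (I i + 1),
        ((dbar i - d i) * t i) ^ j * d i ^ (I i - j) * ((I i).choose j : ℝ) := fun i => by
      rw [hx i]; exact add_pow _ _ _
    rw [Finset.prod_congr rfl (fun i _ => hxi i), multiIdx]
    exact Finset.prod_univ_sum _ _
  have hcomm : ∀ (I J : Fin n → ℕ),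
      I ∈ multiIdx L ∧ J ∈ multiIdx I ↔
      I ∈ Fintype.piFinset (fun i => Finset.Icc (J i) (L i)) ∧ J ∈ multiIdx L := by
    intro I J
    simp only [multiIdx, Fintype.mem_piFinset, Finset.mem_range, Finset.mem_Icc]
    constructor
    · rintro ⟨h1, h2⟩
      exact ⟨fun i => ⟨by have := h2 i; omega, by have := h1 i; omega⟩,
        fun i => by have := h1 i; have := h2 i; omega⟩
    · rintro ⟨h1, h2⟩
      exact ⟨fun i => by have := (h1 i).2; omega, fun i => by have := (h1 i).1; omega⟩
  calc ∑ K ∈ multiIdx L, a K * ∏ i, x i ^ K i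
      = ∑ I ∈ multiIdx L, ∑ J ∈ multiIdx I, a I * ∏ i,
          (((dbar i - d i) * t i) ^ (J i) * d i ^ (I i - J i) * ((I i).choose (J i) : ℝ)) := by
        refine Finset.sum_congr rfl (fun I _ => ?_)
        rw [stepA I, Finset.mul_sum]
    _ = ∑ J ∈ multiIdx L, ∑ I ∈ Fintype.piFinset (fun i => Finset.Icc (J i) (L i)), a I * ∏ i,
          (((dbar i - d i) * t i) ^ (J i) * d i ^ (I i - J i) * ((I i).choose (J i) : ℝ)) :=
        Finset.sum_comm' hcomm
    _ = ∑ J ∈ multiIdx L, ((∏ i, (dbar i - d i) ^ (J i)) * ∏ i, t i ^ (J i)) *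
          (∑ I ∈ Fintype.piFinset (fun i => Finset.Icc (J i) (L i)),
          (∏ i, ((I i).choose (J i) : ℝ)) * (∏ i, (d i) ^ (I i - J i)) * a I) := by
        refine Finset.sum_congr rfl (fun J _ => ?_)
        rw [Finset.mul_sum]
        refine Finset.sum_congr rfl (fun I _ => ?_)
        simp only [mul_pow, Finset.prod_mul_distrib]
        ring
    _ = ∑ J ∈ multiIdx L, ∑ K ∈ multiIdx L,
          ((∏ i, ((K i).choose (J i) : ℝ) / ((L i).choose (J i))) *
            (∏ i, (dbar i - d i) ^ (J i)) *
            (∑ I ∈ Fintype.piFinset (fun i => Finset.Icc (J i) (L i)),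
          (∏ i, ((I i).choose (J i) : ℝ)) * (∏ i, (d i) ^ (I i - J i)) * a I)) * ber L t K := by
        refine Finset.sum_congr rfl (fun J hJ => ?_)
        rw [monomial_expand L J hJ t,
          Finset.mul_sum (multiIdx L)
            (fun K => (∏ i, ((K i).choose (J i) : ℝ) / ((L i).choose (J i))) * ber L t K)
            (∏ i, (dbar i - d i) ^ (J i)),
          Finset.sum_mul]
        exact Finset.sum_congr rfl (fun K _ => by ring)
    _ = ∑ K ∈ multiIdx L, (∑ J ∈ multiIdx L,
          (∏ i, ((K i).choose (J i) : ℝ) / ((L i).choose (J i))) *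
            (∏ i, (dbar i - d i) ^ (J i)) *
            (∑ I ∈ Fintype.piFinset (fun i => Finset.Icc (J i) (L i)),
          (∏ i, ((I i).choose (J i) : ℝ)) * (∏ i, (d i) ^ (I i - J i)) * a I)) * ber L t K := by
        rw [Finset.sum_comm]
        exact Finset.sum_congr rfl (fun K _ => by rw [Finset.sum_mul])
    _ = ∑ K ∈ multiIdx L, bernCoeff L a d dbar K * ber L t K := by
        refine Finset.sum_congr rfl (fun K hK => ?_)
        congr 1
        rw [bernCoeff]
        refine (Finset.sum_subset ?_ ?_).symm
        · intro J hJ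
          simp only [multiIdx, Fintype.mem_piFinset, Finset.mem_range] at *
          intro i
          have := hJ i
          have := hK i
          omega
        · intro J _ hJ
          simp only [multiIdx, Fintype.mem_piFinset, Finset.mem_range] at hJ
          push_neg at hJ
          obtain ⟨i, hi⟩ := hJ
          have : ((K i).choose (J i) : ℝ) / ((L i).choose (J i)) = 0 := by
            rw [Nat.choose_eq_zero_of_lt (by omega)]
            simp
          rw [Finset.prod_eq_zero (Finset.mem_univ i) this, zero_mul, zero_mul]

/-- Soundness of Bernstein sign pruning: if the minimum Bernstein coefficient is positive,
the polynomial is positive everywhere on the box; if the maximum Bernstein coefficient is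
negative, the polynomial is negative everywhere on the box. -/
theorem bernstein_sign_pruning_sound (n : ℕ) (L : Fin n → ℕ)
    (a : (Fin n → ℕ) → ℝ) (d dbar : Fin n → ℝ) (hd : ∀ i, d i < dbar i) :
    (0 < (multiIdx L).inf' (multiIdx_nonempty L) (bernCoeff L a d dbar) →
      ∀ x : Fin n → ℝ, (∀ i, d i ≤ x i ∧ x i ≤ dbar i) →
        0 < ∑ K ∈ multiIdx L, a K * ∏ i, (x i) ^ (K i)) ∧
    ((multiIdx L).sup' (multiIdx_nonempty L) (bernCoeff L a d dbar) < 0 →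
      ∀ x : Fin n → ℝ, (∀ i, d i ≤ x i ∧ x i ≤ dbar i) →
        ∑ K ∈ multiIdx L, a K * ∏ i, (x i) ^ (K i) < 0) := by
  have main : ∀ x : Fin n → ℝ, (∀ i, d i ≤ x i ∧ x i ≤ dbar i) →
      ∃ t : Fin n → ℝ, (∀ i, 0 ≤ t i ∧ t i ≤ 1) ∧
        ∑ K ∈ multiIdx L, a K * ∏ i, (x i) ^ (K i)
          = ∑ K ∈ multiIdx L, bernCoeff L a d dbar K * ber L t K := by
    intro x hx
    refine ⟨fun i => (x i - d i) / (dbar i - d i), ?_, ?_⟩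
    · intro i
      have h1 := (hx i).1
      have h2 := (hx i).2
      have h3 := hd i
      constructor
      · exact div_nonneg (by linarith) (by linarith)
      · rw [div_le_one (by linarith)]; linarith
    · apply expand
      intro i
      have h3 : dbar i - d i ≠ 0 := by have := hd i; intro h; apply absurd this; linarith [sub_eq_zero.mp h]
      field_simp
      ring
  constructor
  · intro hmin x hx
    obtain ⟨t, ht, hEq⟩ := main x hx
    rw [hEq]
    calc (0:ℝ) < (multiIdx L).inf' (multiIdx_nonempty L) (bernCoeff L a d dbar) := hmin
      _ = (multiIdx L).inf' (multiIdx_nonempty L) (bernCoeff L a d dbar) * 1 := (mul_one _).symm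
      _ = (multiIdx L).inf' (multiIdx_nonempty L) (bernCoeff L a d dbar) *
            ∑ K ∈ multiIdx L, ber L t K := by rw [ber_sum_one]
      _ = ∑ K ∈ multiIdx L,
            (multiIdx L).inf' (multiIdx_nonempty L) (bernCoeff L a d dbar) * ber L t K :=
          Finset.mul_sum _ _ _
      _ ≤ ∑ K ∈ multiIdx L, bernCoeff L a d dbar K * ber L t K :=
          Finset.sum_le_sum (fun K hK =>
            mul_le_mul_of_nonneg_right (Finset.inf'_le _ hK) (ber_nonneg L t ht K))
  · intro hmax x hx
    obtain ⟨t, ht, hEq⟩ := main x hx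
    rw [hEq]
    calc ∑ K ∈ multiIdx L, bernCoeff L a d dbar K * ber L t K
        ≤ ∑ K ∈ multiIdx L,
            (multiIdx L).sup' (multiIdx_nonempty L) (bernCoeff L a d dbar) * ber L t K :=
          Finset.sum_le_sum (fun K hK =>
            mul_le_mul_of_nonneg_right (Finset.le_sup' _ hK) (ber_nonneg L t ht K))
      _ = (multiIdx L).sup' (multiIdx_nonempty L) (bernCoeff L a d dbar) *
            ∑ K ∈ multiIdx L, ber L t K := (Finset.mul_sum _ _ _).symm
      _ = (multiIdx L).sup' (multiIdx_nonempty L) (bernCoeff L a d dbar) := by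
          rw [ber_sum_one, mul_one]
      _ < 0 := hmax
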